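/- Higman's commutator trick: let G be a group of permutations of a set X, and let τ, σ₁, σ₂ ∈ G. If τ(supp(σ₁)) is disjoint from supp(σ₁) ∪ supp(σ₂), then the commutator [σ₁, σ₂] is a product of four conjugates (by elements of G) of τ or τ^{-1}. -/

import Mathlib

/-- The support of a permutation. -/
def permSupp {X : Type*} (σ : Equiv.Perm X) : Set X := {x | σ x ≠ x}

open scoped commutatorElement

/-- Higman's commutator trick: if `τ, σ₁, σ₂` belong to a permutation group `G` on `X`
and `τ(supp σ₁)` is disjoint from `supp σ₁ ∪ supp σ₂`, then `[σ₁, σ₂]` is a product of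
four conjugates of `τ` or `τ⁻¹` by elements of `G`. -/
theorem higman_commutator_trick {X : Type*} (G : Subgroup (Equiv.Perm X))
    (τ σ₁ σ₂ : Equiv.Perm X) (hτ : τ ∈ G) (h₁ : σ₁ ∈ G) (h₂ : σ₂ ∈ G)
    (hdisj : Disjoint (τ '' permSupp σ₁) (permSupp σ₁ ∪ permSupp σ₂)) :
    ∃ (g : Fin 4 → Equiv.Perm X) (e : Fin 4 → ℤ),
      (∀ i, g i ∈ G) ∧ (∀ i, e i = 1 ∨ e i = -1) ∧
      ⁅σ₁, σ₂⁆ = (List.ofFn fun i => g i * τ ^ (e i) * (g i)⁻¹).prod := by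
  set β : Equiv.Perm X := τ * σ₁⁻¹ * τ⁻¹ with hβ
  -- β commutes with σ₂ since their supports are disjoint
  have hc : Commute β σ₂ := by
    apply Equiv.Perm.Disjoint.commute
    intro x
    by_contra hx
    push_neg at hx
    obtain ⟨hbx, hsx⟩ := hx
    have hmem : x ∈ τ '' permSupp σ₁ := by
      refine ⟨τ⁻¹ x, ?_, by simp⟩
      intro h
      apply hbx
      simp only [hβ, Equiv.Perm.mul_apply]
      have : σ₁⁻¹ (τ⁻¹ x) = τ⁻¹ x := by
        nth_rewrite 1 [← h]; simp
      rw [this]; simp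
    exact absurd (hdisj.le_bot ⟨hmem, Or.inr hsx⟩) (by simp)
  refine ⟨![σ₁, 1, σ₂, σ₂ * σ₁], ![1, -1, 1, -1], ?_, ?_, ?_⟩
  · intro i
    fin_cases i <;> simp [h₁, h₂, mul_mem h₂ h₁, one_mem]
  · intro i
    fin_cases i <;> simp
  · have hps : σ₁ * β * σ₂ * β⁻¹ * σ₁⁻¹ * σ₂⁻¹ = σ₁ * σ₂ * σ₁⁻¹ * σ₂⁻¹ := by
      rw [mul_assoc σ₁ β σ₂, hc.eq, ← mul_assoc, mul_assoc (σ₁ * σ₂) β β⁻¹]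
      simp
    have : ⁅σ₁, σ₂⁆ = σ₁ * β * σ₂ * β⁻¹ * σ₁⁻¹ * σ₂⁻¹ := by
      rw [hps, commutatorElement_def]
    rw [this]
    simp only [List.ofFn, hβ]
    simp [Fin.foldr, Fin.foldr.loop, zpow_one, zpow_neg, mul_assoc]
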